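/- For every N > 0 and every a ∈ ℝ, ∫_ℝ q̃(y)²/q₀(y) dy = cosh(2a²/N) = ½·(exp(2a²/N) + exp(−2a²/N)). -/

import Mathlib

open MeasureTheory

/-- Density of the Gaussian distribution with mean `0` and variance `N/2`. -/
noncomputable def q0 (N z : ℝ) : ℝ := (Real.sqrt (Real.pi * N))⁻¹ * Real.exp (-z ^ 2 / N)

/-- Density of the Gaussian distribution with mean `a` and variance `N/2`. -/
noncomputable def qa (N a z : ℝ) : ℝ := (Real.sqrt (Real.pi * N))⁻¹ * Real.exp (-(z - a) ^ 2 / N)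

/-- The binary mixture density `½ q_a + ½ q_{-a}`. -/
noncomputable def qmix (N a z : ℝ) : ℝ := (1 / 2) * qa N a z + (1 / 2) * qa N (-a) z

/-- The log-likelihood ratio `log (q̃(z)/q₀(z))`. -/
noncomputable def llr (N a z : ℝ) : ℝ := Real.log (qmix N a z / q0 N z)

lemma qa_eq (N b : ℝ) (hN : 0 < N) :
    qa N b = fun y => (Real.sqrt (Real.pi * N))⁻¹ * Real.exp (-(1/N) * (y - b)^2) := by
  funext y
  unfold qa
  congr 1
  field_simp

lemma integrable_qa (N : ℝ) (hN : 0 < N) (b : ℝ) : Integrable (qa N b) := by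
  rw [qa_eq N b hN]
  exact ((integrable_exp_neg_mul_sq (by positivity : (0:ℝ) < 1/N)).comp_sub_right b).const_mul _

lemma integral_qa (N : ℝ) (hN : 0 < N) (b : ℝ) : ∫ y : ℝ, qa N b y = 1 := by
  rw [qa_eq N b hN]
  rw [integral_const_mul]
  rw [integral_sub_right_eq_self (μ := volume) (fun y => Real.exp (-(1/N) * y^2)) b]
  rw [integral_gaussian]
  rw [show Real.pi / (1/N) = Real.pi * N by field_simp]
  rw [inv_mul_cancel₀]
  exact ne_of_gt (Real.sqrt_pos.mpr (by positivity))

lemma prod_div (N : ℝ) (hN : 0 < N) (b c y : ℝ) :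
    qa N b y * qa N c y / q0 N y = Real.exp (2*b*c/N) * qa N (b+c) y := by
  have hs : (0:ℝ) < Real.sqrt (Real.pi * N) := Real.sqrt_pos.mpr (by positivity)
  simp only [qa, q0]
  have key : ∀ A B C : ℝ, ((Real.sqrt (Real.pi * N))⁻¹ * Real.exp A) *
      ((Real.sqrt (Real.pi * N))⁻¹ * Real.exp B) /
      ((Real.sqrt (Real.pi * N))⁻¹ * Real.exp C) =
      (Real.sqrt (Real.pi * N))⁻¹ * Real.exp (A + B - C) := by
    intro A B C
    rw [Real.exp_sub, Real.exp_add]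
    field_simp
  rw [key, mul_left_comm, ← Real.exp_add]
  congr 2
  field_simp
  ring

/-- `∫ q̃²/q₀ = cosh(2a²/N) = ½ (e^{2a²/N} + e^{-2a²/N})`. -/
theorem integral_qmix_sq_div_q0 (N a : ℝ) (hN : 0 < N) :
    (∫ y : ℝ, (qmix N a y) ^ 2 / q0 N y) = Real.cosh (2 * a ^ 2 / N) ∧
    Real.cosh (2 * a ^ 2 / N) =
      (1 / 2) * (Real.exp (2 * a ^ 2 / N) + Real.exp (-(2 * a ^ 2 / N))) := by
  constructor
  · have hpt : ∀ y : ℝ, (qmix N a y) ^ 2 / q0 N y =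
        (1/4) * (Real.exp (2*a*a/N) * qa N (a+a) y) +
        ((1/2) * (Real.exp (2*a*(-a)/N) * qa N (a + -a) y) +
        (1/4) * (Real.exp (2*(-a)*(-a)/N) * qa N (-a + -a) y)) := by
      intro y
      rw [← prod_div N hN a a y, ← prod_div N hN a (-a) y, ← prod_div N hN (-a) (-a) y]
      have h0 : q0 N y ≠ 0 := by
        unfold q0
        positivity
      unfold qmix
      field_simp
      ring
    simp only [hpt]
    rw [integral_add, integral_add]
    · rw [integral_const_mul, integral_const_mul, integral_const_mul,
        integral_const_mul, integral_const_mul, integral_const_mul,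
        integral_qa N hN, integral_qa N hN, integral_qa N hN]
      rw [Real.cosh_eq]
      rw [show 2*a*(-a)/N = -(2*a^2/N) by ring, show 2*a*a/N = 2*a^2/N by ring,
        show 2*(-a)*(-a)/N = 2*a^2/N by ring]
      ring
    · exact (((integrable_qa N hN _).const_mul _).const_mul _)
    · exact (((integrable_qa N hN _).const_mul _).const_mul _)
    · exact (((integrable_qa N hN _).const_mul _).const_mul _)
    · exact ((((integrable_qa N hN _).const_mul _).const_mul _).add
        (((integrable_qa N hN _).const_mul _).const_mul _))
  · rw [Real.cosh_eq]; ring
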